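/- arXiv:2103.10854 — 4 statements merged into one kernel-verified Lean document; each statement's English description precedes it below -/
import Mathlib

section
/- Let ε > 0 and μ_i ∈ M^+(X_i) with ln(σ_{μ_i}) ∈ L^∞(X_i,γ_i) for all i, and let f ∈ L^{∞,×}(X). Then for every j = 1,…,N one has ‖f^{(c,ε,j)} + λ_{f,j}‖_{L^∞(X_j,γ_j)} ≤ ‖c‖_{L^∞(X,γ^⊗)} + ε‖ln(σ_{μ_j})‖_{L^∞(X_j,γ_j)}, where λ_{f,j} = ε ln ∫_{×_{i≠j} X_i} exp(f_j^⊕/ε) dγ_j^⊗ ∈ ℝ. In particular, f^{(c,ε,j)} has bounded oscillation: sup_{y∈X_j} f^{(c,ε,j)}(y) − inf_{y∈X_j} f^{(c,ε,j)}(y) < ∞. -/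
open MeasureTheory ENNReal Real Filter Topology

noncomputable section
namespace UMOT

/-- The Boltzmann–Shannon entropy integrand `x ↦ x log x − x + 1` (with value `⊤` on `(-∞,0)`). -/
def klFun (x : ℝ) : ℝ≥0∞ := if x < 0 then ⊤ else ENNReal.ofReal (x * Real.log x - x + 1)

/-- The recession constant `φ'_∞ = lim_{x→∞} φ(x)/x` of an entropy function. -/
def recession (φ : ℝ → ℝ≥0∞) : ℝ≥0∞ :=
  Filter.limsup (fun x : ℝ => φ x / ENNReal.ofReal x) Filter.atTop

/-- The φ-divergence `D_φ(μ,ν) = ∫ φ(dμ/dν) dν + φ'_∞ μ^⊥(X)`. -/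
def Dphi {Z : Type*} [MeasurableSpace Z] (φ : ℝ → ℝ≥0∞) (μ ν : Measure Z) : ℝ≥0∞ :=
  ∫⁻ z, φ ((μ.rnDeriv ν z).toReal) ∂ν + recession φ * μ.singularPart ν Set.univ

/-- The Kullback–Leibler divergence, i.e. the φ-divergence for the Boltzmann–Shannon entropy. -/
def KL {Z : Type*} [MeasurableSpace Z] (μ ν : Measure Z) : ℝ≥0∞ := Dphi klFun μ ν

/-- An entropy function: nonnegative (by the codomain `ℝ≥0∞`), proper (since `φ 1 = 0`),
convex, lower semicontinuous, with `φ 1 = 0` and `φ = ⊤` on `(-∞,0)`. -/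
structure IsEntropyFunction (φ : ℝ → ℝ≥0∞) : Prop where
  one_eq_zero : φ 1 = 0
  top_of_neg : ∀ x : ℝ, x < 0 → φ x = ⊤
  lsc : LowerSemicontinuous φ
  convex : ∀ x y t : ℝ, 0 ≤ t → t ≤ 1 →
    φ (t * x + (1 - t) * y) ≤ ENNReal.ofReal t * φ x + ENNReal.ofReal (1 - t) * φ y

/-- Reassemble a point of the product space from its `j`-th coordinate and the remaining
coordinates. -/
def glue {N : ℕ} {X : Fin N → Type*} (j : Fin N) (y : X j)
    (z : ∀ i : {i : Fin N // i ≠ j}, X i.1) (i : Fin N) : X i :=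
  if h : i = j then cast (congrArg X h.symm) y else z ⟨i, h⟩

/-- The `j`-th `(c,ε)`-transform
`f^{(c,ε,j)}(y) = ε ln σ_{μ_j}(y) − ε ln ∫ exp((Σ_{i≠j} f_i − c)/ε) dγ_j^⊗`,
where `σ` is the tuple of densities `σ_{μ_i} = dμ_i/dγ_i`. -/
def ctransform {N : ℕ} {X : Fin N → Type*} [∀ i, MeasurableSpace (X i)]
    (c : (∀ i, X i) → ℝ) (ε : ℝ) (σ : ∀ i, X i → ℝ) (γ : ∀ i, Measure (X i))
    (f : ∀ i, X i → ℝ) (j : Fin N) (y : X j) : ℝ :=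
  ε * Real.log (σ j y) -
    ε * Real.log (∫ z : ∀ i : {i : Fin N // i ≠ j}, X i.1,
      Real.exp (((∑ i : {i : Fin N // i ≠ j}, f i.1 (z i)) - c (glue j y z)) / ε)
        ∂(Measure.pi fun i : {i : Fin N // i ≠ j} => γ i.1))

/-- Membership in `L^{∞,×}(X)`: each component is a bounded measurable function. -/
def BddMeasTuple {N : ℕ} {X : Fin N → Type*} [∀ i, MeasurableSpace (X i)]
    (f : ∀ i, X i → ℝ) : Prop :=
  ∀ i, Measurable (f i) ∧ ∃ M : ℝ, ∀ x, |f i x| ≤ M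

/-- The constant `λ_{f,j} = ε ln ∫ exp(f_j^⊕/ε) dγ_j^⊗`. -/
def lamConst {N : ℕ} {X : Fin N → Type*} [∀ i, MeasurableSpace (X i)]
    (ε : ℝ) (γ : ∀ i, Measure (X i)) (f : ∀ i, X i → ℝ) (j : Fin N) : ℝ :=
  ε * Real.log (∫ z : ∀ i : {i : Fin N // i ≠ j}, X i.1,
      Real.exp ((∑ i : {i : Fin N // i ≠ j}, f i.1 (z i)) / ε)
        ∂(Measure.pi fun i : {i : Fin N // i ≠ j} => γ i.1))

section Aux

variable {N : ℕ} {X : Fin N → Type*} [∀ i, MeasurableSpace (X i)]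

@[simp] lemma glue_apply_same {j : Fin N} (y : X j)
    (z : ∀ i : {i : Fin N // i ≠ j}, X i.1) : glue j y z j = y := by
  simp [glue]

@[simp] lemma glue_apply_ne {j : Fin N} (y : X j)
    (z : ∀ i : {i : Fin N // i ≠ j}, X i.1) {i : Fin N} (h : i ≠ j) :
    glue j y z i = z ⟨i, h⟩ := by
  simp [glue, h]

lemma measurable_glue {j : Fin N} :
    Measurable (fun p : X j × (∀ i : {i : Fin N // i ≠ j}, X i.1) => glue j p.1 p.2) := by
  apply measurable_pi_lambda
  intro i
  by_cases h : i = j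
  · subst h
    simp only [glue_apply_same]
    exact measurable_fst
  · simp only [glue_apply_ne _ _ h]
    exact (measurable_pi_apply _).comp measurable_snd

lemma glue_measurePreserving (γ : ∀ i, Measure (X i)) [∀ i, SigmaFinite (γ i)] (j : Fin N) :
    MeasurePreserving (fun p : X j × (∀ i : {i : Fin N // i ≠ j}, X i.1) => glue j p.1 p.2)
      ((γ j).prod (Measure.pi fun i : {i : Fin N // i ≠ j} => γ i.1)) (Measure.pi γ) := by
  classical
  letI : Fintype {i : Fin N // i = j} := Subtype.fintype _
  letI : Unique {i : Fin N // i = j} := ⟨⟨⟨j, rfl⟩⟩, fun i => Subtype.ext i.2⟩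
  have h1 : MeasurePreserving (MeasurableEquiv.piEquivPiSubtypeProd X (· = j)).symm
      ((Measure.pi fun i : {i : Fin N // i = j} => γ i.1).prod
        (Measure.pi fun i : {i : Fin N // i ≠ j} => γ i.1)) (Measure.pi γ) :=
    (measurePreserving_piEquivPiSubtypeProd γ (· = j)).symm _
  have h2 : MeasurePreserving
      (MeasurableEquiv.piUnique (fun i : {i : Fin N // i = j} => X i.1)).symm
      (γ j) (Measure.pi fun i : {i : Fin N // i = j} => γ i.1) :=
    (measurePreserving_piUnique fun i : {i : Fin N // i = j} => γ i.1).symm _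
  have h3 := h1.comp (h2.prod (MeasurePreserving.id
      (Measure.pi fun i : {i : Fin N // i ≠ j} => γ i.1)))
  have heq : (fun p : X j × (∀ i : {i : Fin N // i ≠ j}, X i.1) => glue j p.1 p.2)
      = (⇑(MeasurableEquiv.piEquivPiSubtypeProd X (· = j)).symm ∘
          Prod.map (⇑(MeasurableEquiv.piUnique (fun i : {i : Fin N // i = j} => X i.1)).symm)
            id) := by
    funext p
    ext i
    by_cases h : i = j
    · subst h
      simp only [MeasurableEquiv.piEquivPiSubtypeProd, MeasurableEquiv.piUnique,
        Equiv.piEquivPiSubtypeProd, Equiv.piUnique, MeasurableEquiv.symm, Equiv.symm,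
        MeasurableEquiv.coe_mk, Equiv.coe_fn_mk,
        Function.comp_apply, Prod.map_apply, id_eq, glue_apply_same, dif_pos]
      exact (uniqueElim_default (α := fun k : {k : Fin N // k = i} => X k.1) p.1).symm
    · simp [MeasurableEquiv.piEquivPiSubtypeProd, MeasurableEquiv.piUnique,
        Equiv.piEquivPiSubtypeProd, Equiv.piUnique, MeasurableEquiv.symm, Equiv.symm, h]
  rw [heq]
  exact h3

end Aux

/-- (Lemma 4.1 i)): a uniform bound on the recentered `(c,ε)`-transform,
`‖f^{(c,ε,j)} + λ_{f,j}‖_{L^∞(X_j,γ_j)} ≤ ‖c‖_{L^∞(X,γ^⊗)} + ε ‖ln σ_{μ_j}‖_{L^∞(X_j,γ_j)}`;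
in particular `f^{(c,ε,j)}` has bounded oscillation. -/
theorem ctransform_bound
    {N : ℕ} {X : Fin N → Type*}
    [∀ i, TopologicalSpace (X i)] [∀ i, PolishSpace (X i)] [∀ i, CompactSpace (X i)]
    [∀ i, Nonempty (X i)] [∀ i, MeasurableSpace (X i)] [∀ i, BorelSpace (X i)]
    (γ : ∀ i, Measure (X i)) [∀ i, IsFiniteMeasure (γ i)]
    (μ : ∀ i, Measure (X i)) [∀ i, IsFiniteMeasure (μ i)]
    (σ : ∀ i, X i → ℝ) (hσm : ∀ i, Measurable (σ i))
    (hσd : ∀ i, μ i = (γ i).withDensity (fun x => ENNReal.ofReal (σ i x)))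
    (hσb : ∀ i, ∃ M : ℝ, ∀ x, |Real.log (σ i x)| ≤ M)
    (c : (∀ i, X i) → ℝ) (hc : Continuous c) (hc0 : ∀ x, 0 ≤ c x)
    (ε : ℝ) (hε : 0 < ε)
    (f : ∀ i, X i → ℝ) (hf : BddMeasTuple f) (j : Fin N) :
    essSup (fun y => (ENNReal.ofReal |ctransform c ε σ γ f j y + lamConst ε γ f j|)) (γ j)
      ≤ essSup (fun x => (ENNReal.ofReal |c x|)) (Measure.pi γ)
        + ENNReal.ofReal ε * essSup (fun y => (ENNReal.ofReal |Real.log (σ j y)|)) (γ j)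
    ∧ ∃ M : ℝ, ∀ y y' : X j,
        ctransform c ε σ γ f j y - ctransform c ε σ γ f j y' ≤ M := by
  classical
  obtain ⟨Mj, hMj⟩ := hσb j
  set γ' : Measure (∀ i : {i : Fin N // i ≠ j}, X i.1) :=
    Measure.pi fun i : {i : Fin N // i ≠ j} => γ i.1 with hγ'def
  haveI : IsFiniteMeasure γ' := by rw [hγ'def]; infer_instance
  choose Mf hMf using fun i => (hf i).2
  set S : (∀ i : {i : Fin N // i ≠ j}, X i.1) → ℝ :=
    fun z => ∑ i : {i : Fin N // i ≠ j}, f i.1 (z i) with hSdef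
  set MS : ℝ := ∑ i : {i : Fin N // i ≠ j}, Mf i.1 with hMSdef
  have hS_abs : ∀ z, |S z| ≤ MS := by
    intro z
    calc |S z| ≤ ∑ i : {i : Fin N // i ≠ j}, |f i.1 (z i)| := Finset.abs_sum_le_sum_abs _ _
    _ ≤ MS := Finset.sum_le_sum fun i _ => hMf i.1 (z i)
  obtain ⟨z₀⟩ : Nonempty (∀ i : {i : Fin N // i ≠ j}, X i.1) := inferInstance
  have hMS0 : 0 ≤ MS := le_trans (abs_nonneg _) (hS_abs z₀)
  obtain ⟨x₀, -, hCmax⟩ :=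
    IsCompact.exists_isMaxOn (isCompact_univ : IsCompact (Set.univ : Set (∀ i, X i)))
      ⟨Classical.choice inferInstance, trivial⟩ hc.continuousOn
  set C : ℝ := c x₀ with hCdef
  have hC' : ∀ x, c x ≤ C := fun x => hCmax (Set.mem_univ x)
  have hC0 : 0 ≤ C := hc0 x₀
  have hSm : Measurable S :=
    Finset.measurable_sum _ fun i _ => (hf i.1).1.comp (measurable_pi_apply i)
  have hcm : Measurable c := hc.measurable
  have hgm : Measurable
      (fun p : X j × (∀ i : {i : Fin N // i ≠ j}, X i.1) => glue j p.1 p.2) := measurable_glue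
  have hgy : ∀ y : X j, Measurable fun z => glue j y z :=
    fun y => hgm.comp measurable_prodMk_left
  set A : X j → ℝ := fun y => ∫ z, Real.exp ((S z - c (glue j y z)) / ε) ∂γ' with hAdef
  set B : ℝ := ∫ z, Real.exp (S z / ε) ∂γ' with hBdef
  have hct : ∀ y, ctransform c ε σ γ f j y
      = ε * Real.log (σ j y) - ε * Real.log (A y) := fun y => rfl
  have hlam : lamConst ε γ f j = ε * Real.log B := rfl
  have hmono : ∀ a b : ℝ, a ≤ b → Real.exp (a / ε) ≤ Real.exp (b / ε) :=
    fun a b h => Real.exp_le_exp.2 ((div_le_div_iff_of_pos_right hε).2 h)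
  have hmB : Measurable fun z => Real.exp (S z / ε) := (hSm.div_const ε).exp
  have hmA : ∀ y, Measurable fun z => Real.exp ((S z - c (glue j y z)) / ε) :=
    fun y => ((hSm.sub (hcm.comp (hgy y))).div_const ε).exp
  have hub : ∀ y z, Real.exp ((S z - c (glue j y z)) / ε) ≤ Real.exp (MS / ε) :=
    fun y z => hmono _ _ ((sub_le_self _ (hc0 _)).trans (le_of_abs_le (hS_abs z)))
  have hlb : ∀ y z, Real.exp ((-MS - C) / ε) ≤ Real.exp ((S z - c (glue j y z)) / ε) :=
    fun y z => hmono _ _ (sub_le_sub (abs_le.1 (hS_abs z)).1 (hC' _))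
  have hiB : Integrable (fun z => Real.exp (S z / ε)) γ' := by
    refine (integrable_const (Real.exp (MS / ε))).mono' hmB.aestronglyMeasurable ?_
    refine ae_of_all _ fun z => ?_
    rw [Real.norm_eq_abs, abs_of_nonneg (Real.exp_pos _).le]
    exact hmono _ _ (le_of_abs_le (hS_abs z))
  have hiA : ∀ y, Integrable (fun z => Real.exp ((S z - c (glue j y z)) / ε)) γ' := by
    intro y
    refine (integrable_const (Real.exp (MS / ε))).mono' (hmA y).aestronglyMeasurable ?_
    refine ae_of_all _ fun z => ?_
    rw [Real.norm_eq_abs, abs_of_nonneg (Real.exp_pos _).le]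
    exact hub y z
  set m : ℝ := (γ' Set.univ).toReal with hmdef
  have hAub : ∀ y, A y ≤ Real.exp (MS / ε) * m := by
    intro y
    have := integral_mono (hiA y) (integrable_const _) (hub y)
    rwa [integral_const, smul_eq_mul, mul_comm] at this
  have hAlb : ∀ y, Real.exp ((-MS - C) / ε) * m ≤ A y := by
    intro y
    have := integral_mono (integrable_const _) (hiA y) (hlb y)
    rwa [integral_const, smul_eq_mul, mul_comm] at this
  have hAB : ∀ y, A y ≤ B :=
    fun y => integral_mono (hiA y) hiB fun z =>
      hmono _ _ (sub_le_self _ (hc0 _))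
  -- essSup facts for c
  set K1 := essSup (fun x => ENNReal.ofReal |c x|) (Measure.pi γ) with hK1def
  have hK1top : K1 ≠ ⊤ := by
    refine ne_top_of_le_ne_top (ENNReal.ofReal_ne_top (r := C)) ?_
    refine essSup_le_of_ae_le _ (ae_of_all _ fun x => ?_)
    exact ENNReal.ofReal_le_ofReal (by rw [abs_of_nonneg (hc0 x)]; exact hC' x)
  set Cr : ℝ := K1.toReal with hCrdef
  have hCr0 : 0 ≤ Cr := ENNReal.toReal_nonneg
  have hK1eq : ENNReal.ofReal Cr = K1 := ENNReal.ofReal_toReal hK1top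
  have haec : ∀ᵐ x ∂(Measure.pi γ), |c x| ≤ Cr := by
    filter_upwards [ae_le_essSup (fun x => ENNReal.ofReal |c x|)] with x hx
    rw [← hK1def, ← hK1eq] at hx
    exact (ENNReal.ofReal_le_ofReal_iff hCr0).1 hx
  have hsmeas : MeasurableSet {x : ∀ i, X i | Cr < |c x|} :=
    measurableSet_lt measurable_const hcm.abs
  have hs0 : Measure.pi γ {x : ∀ i, X i | Cr < |c x|} = 0 := by
    have := ae_iff.1 haec
    simpa [not_le] using this
  have hMP := glue_measurePreserving γ j
  rw [← hγ'def] at hMP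
  have hpre : ((γ j).prod γ')
      ((fun p : X j × (∀ i : {i : Fin N // i ≠ j}, X i.1) => glue j p.1 p.2) ⁻¹'
        {x : ∀ i, X i | Cr < |c x|}) = 0 := by
    rw [hMP.measure_preimage hsmeas.nullMeasurableSet]; exact hs0
  have hae2 : ∀ᵐ y ∂(γ j), ∀ᵐ z ∂γ', |c (glue j y z)| ≤ Cr := by
    have hps : MeasurableSet
        ((fun p : X j × (∀ i : {i : Fin N // i ≠ j}, X i.1) => glue j p.1 p.2) ⁻¹'
          {x : ∀ i, X i | Cr < |c x|}) := hgm hsmeas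
    have h := (Measure.measure_prod_null hps).1 hpre
    filter_upwards [h] with y hy
    rw [ae_iff]
    have hset : {z | ¬ |c (glue j y z)| ≤ Cr}
        = Prod.mk y ⁻¹' ((fun p : X j × (∀ i : {i : Fin N // i ≠ j}, X i.1) =>
            glue j p.1 p.2) ⁻¹' {x : ∀ i, X i | Cr < |c x|}) := by
      ext z; simp [not_le]
    rw [hset]; exact hy
  -- the core bound
  have hcore : ∀ y : X j, (∀ᵐ z ∂γ', |c (glue j y z)| ≤ Cr) →
      |ε * Real.log B - ε * Real.log (A y)| ≤ Cr := by
    intro y hy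
    by_cases hm' : γ' = 0
    · have hA0 : A y = 0 := by simp [hAdef, hm']
      have hB0 : B = 0 := by simp [hBdef, hm']
      simp [hA0, hB0, hCr0]
    · have hmpos : 0 < m := by
        rw [hmdef]
        exact ENNReal.toReal_pos (Measure.measure_univ_ne_zero.2 hm') (measure_ne_top _ _)
      have hApos : 0 < A y :=
        lt_of_lt_of_le (mul_pos (Real.exp_pos _) hmpos) (hAlb y)
      have hBpos : 0 < B := lt_of_lt_of_le hApos (hAB y)
      have h1 : Real.log (A y) ≤ Real.log B := Real.log_le_log hApos (hAB y)
      have h2 : B ≤ Real.exp (Cr / ε) * A y := by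
        have hbnd : ∀ᵐ z ∂γ', Real.exp (S z / ε)
            ≤ Real.exp (Cr / ε) * Real.exp ((S z - c (glue j y z)) / ε) := by
          filter_upwards [hy] with z hz
          rw [← Real.exp_add, ← add_div]
          exact Real.exp_le_exp.2 ((div_le_div_iff_of_pos_right hε).2
            (by linarith [le_abs_self (c (glue j y z))]))
        have := integral_mono_ae hiB ((hiA y).const_mul (Real.exp (Cr / ε))) hbnd
        rwa [integral_const_mul] at this
      have h3 : Real.log B ≤ Cr / ε + Real.log (A y) := by
        calc Real.log B ≤ Real.log (Real.exp (Cr / ε) * A y) := Real.log_le_log hBpos h2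
        _ = Cr / ε + Real.log (A y) := by
            rw [Real.log_mul (Real.exp_ne_zero _) (ne_of_gt hApos), Real.log_exp]
      have hnn : 0 ≤ ε * Real.log B - ε * Real.log (A y) := by nlinarith
      rw [abs_of_nonneg hnn]
      have h4 : Real.log B - Real.log (A y) ≤ Cr / ε := by linarith
      calc ε * Real.log B - ε * Real.log (A y)
          = ε * (Real.log B - Real.log (A y)) := by ring
      _ ≤ ε * (Cr / ε) := mul_le_mul_of_nonneg_left h4 hε.le
      _ = Cr := by field_simp
  constructor
  · refine essSup_le_of_ae_le _ ?_
    filter_upwards [hae2, ae_le_essSup (fun y => ENNReal.ofReal |Real.log (σ j y)|)]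
      with y hy hy2
    have hcy := hcore y hy
    have hg : |ctransform c ε σ γ f j y + lamConst ε γ f j|
        ≤ Cr + ε * |Real.log (σ j y)| := by
      rw [hct y, hlam]
      have hre : ε * Real.log (σ j y) - ε * Real.log (A y) + ε * Real.log B
          = ε * Real.log (σ j y) + (ε * Real.log B - ε * Real.log (A y)) := by ring
      rw [hre]
      calc |ε * Real.log (σ j y) + (ε * Real.log B - ε * Real.log (A y))|
          ≤ |ε * Real.log (σ j y)| + |ε * Real.log B - ε * Real.log (A y)| := abs_add_le _ _
      _ ≤ ε * |Real.log (σ j y)| + Cr := by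
          rw [abs_mul, abs_of_nonneg hε.le]
          exact add_le_add le_rfl hcy
      _ = Cr + ε * |Real.log (σ j y)| := by ring
    calc ENNReal.ofReal |ctransform c ε σ γ f j y + lamConst ε γ f j|
        ≤ ENNReal.ofReal (Cr + ε * |Real.log (σ j y)|) := ENNReal.ofReal_le_ofReal hg
    _ = ENNReal.ofReal Cr + ENNReal.ofReal ε * ENNReal.ofReal |Real.log (σ j y)| := by
        rw [ENNReal.ofReal_add hCr0 (mul_nonneg hε.le (abs_nonneg _)),
          ENNReal.ofReal_mul hε.le]
    _ ≤ K1 + ENNReal.ofReal ε * essSup (fun y => ENNReal.ofReal |Real.log (σ j y)|) (γ j) := by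
        rw [hK1eq]
        exact add_le_add le_rfl (mul_le_mul_right hy2 _)
  · refine ⟨2 * (ε * Mj) + (2 * MS + C), fun y y' => ?_⟩
    have hlog : ε * (Real.log (A y') - Real.log (A y)) ≤ 2 * MS + C := by
      by_cases hm' : γ' = 0
      · have hA0 : ∀ u, A u = 0 := fun u => by simp [hAdef, hm']
        rw [hA0 y, hA0 y']
        simpa using by linarith
      · have hmpos : 0 < m := by
          rw [hmdef]
          exact ENNReal.toReal_pos (Measure.measure_univ_ne_zero.2 hm') (measure_ne_top _ _)
        have hApos : ∀ u, 0 < A u :=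
          fun u => lt_of_lt_of_le (mul_pos (Real.exp_pos _) hmpos) (hAlb u)
        have hd : Real.log (A y') - Real.log (A y) ≤ (2 * MS + C) / ε := by
          have l1 : Real.log (A y') ≤ Real.log (Real.exp (MS / ε) * m) :=
            Real.log_le_log (hApos y') (hAub y')
          have l2 : Real.log (Real.exp ((-MS - C) / ε) * m) ≤ Real.log (A y) :=
            Real.log_le_log (mul_pos (Real.exp_pos _) hmpos) (hAlb y)
          have e1 : Real.log (Real.exp (MS / ε) * m) = MS / ε + Real.log m := by
            rw [Real.log_mul (Real.exp_ne_zero _) (ne_of_gt hmpos), Real.log_exp]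
          have e2 : Real.log (Real.exp ((-MS - C) / ε) * m)
              = (-MS - C) / ε + Real.log m := by
            rw [Real.log_mul (Real.exp_ne_zero _) (ne_of_gt hmpos), Real.log_exp]
          have : Real.log (A y') - Real.log (A y)
              ≤ MS / ε + Real.log m - ((-MS - C) / ε + Real.log m) := by
            rw [← e1, ← e2]; exact sub_le_sub l1 l2
          calc Real.log (A y') - Real.log (A y)
              ≤ MS / ε + Real.log m - ((-MS - C) / ε + Real.log m) := this
          _ = (2 * MS + C) / ε := by field_simp; ring
        calc ε * (Real.log (A y') - Real.log (A y)) ≤ ε * ((2 * MS + C) / ε) :=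
          mul_le_mul_of_nonneg_left hd hε.le
        _ = 2 * MS + C := by field_simp
    rw [hct y, hct y']
    have b1 : ε * Real.log (σ j y) ≤ ε * Mj :=
      mul_le_mul_of_nonneg_left (abs_le.1 (hMj y)).2 hε.le
    have b2 : ε * (-Mj) ≤ ε * Real.log (σ j y') :=
      mul_le_mul_of_nonneg_left (abs_le.1 (hMj y')).1 hε.le
    nlinarith [hlog, b1, b2]


end UMOT
end
end

section
/- For every entropy function φ ∈ Γ_0(ℝ) and ε > 0, the anisotropic proximity operator aprox_{φ^*}^ε(p) = argmin_{q∈ℝ} { ε e^{(p−q)/ε} + φ^*(q) } is well-defined (the minimizer exists and is unique) and the map p ↦ aprox_{φ^*}^ε(p) is 1-Lipschitz on ℝ. -/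
open MeasureTheory ENNReal Real Filter Topology

noncomputable section
namespace UMOT

/-- Fenchel conjugate `φ^*(q) = sup_x (qx − φ(x))`, valued in the extended reals. -/
def fconj (φ : ℝ → ℝ≥0∞) (q : ℝ) : EReal :=
  ⨆ x : ℝ, ((q * x : ℝ) : EReal) - ((φ x : ℝ≥0∞) : EReal)

/-- The objective of the anisotropic proximity operator, `q ↦ ε e^{(p−q)/ε} + φ^*(q)`. -/
def aproxObj (φ : ℝ → ℝ≥0∞) (ε p q : ℝ) : EReal :=
  ((ε * Real.exp ((p - q) / ε) : ℝ) : EReal) + fconj φ q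

variable {φ : ℝ → ℝ≥0∞}

lemma le_fconj (hφ : IsEntropyFunction φ) (q : ℝ) : (q : EReal) ≤ fconj φ q := by
  have h := le_iSup (fun x : ℝ => ((q * x : ℝ) : EReal) - ((φ x : ℝ≥0∞) : EReal)) 1
  simp [hφ.one_eq_zero] at h
  exact h

lemma fconj_ne_bot (hφ : IsEntropyFunction φ) (q : ℝ) : fconj φ q ≠ ⊥ :=
  ((EReal.bot_lt_coe q).trans_le (le_fconj hφ q)).ne'

lemma fconj_zero (hφ : IsEntropyFunction φ) : fconj φ 0 = 0 := by
  refine le_antisymm (iSup_le fun x => ?_) (by simpa using le_fconj hφ 0)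
  have h0 : (0 : EReal) ≤ ((φ x : ℝ≥0∞) : EReal) := EReal.coe_ennreal_nonneg _
  have := EReal.sub_le_sub (le_refl ((0 : ℝ) : EReal)) h0
  simpa using this

lemma coe_phi_real {x : ℝ} (hx : φ x ≠ ⊤) :
    ((φ x : ℝ≥0∞) : EReal) = (((φ x).toReal : ℝ) : EReal) := by
  rw [← EReal.toReal_coe_ennreal,
    EReal.coe_toReal (by simp [hx]) (EReal.coe_ennreal_ne_bot _)]

lemma fconj_lsc : LowerSemicontinuous (fconj φ) := by
  apply lowerSemicontinuous_iSup
  intro x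
  rcases eq_or_ne (φ x) ⊤ with hx | hx
  · have : (fun q : ℝ => ((q * x : ℝ) : EReal) - ((φ x : ℝ≥0∞) : EReal)) = fun _ => ⊥ := by
      funext q; simp [hx]
    rw [this]; exact lowerSemicontinuous_const
  · have : (fun q : ℝ => ((q * x : ℝ) : EReal) - ((φ x : ℝ≥0∞) : EReal))
        = fun q : ℝ => ((q * x - (φ x).toReal : ℝ) : EReal) := by
      funext q; rw [coe_phi_real hx, ← EReal.coe_sub]
    rw [this]
    exact (continuous_coe_real_ereal.comp (by continuity)).lowerSemicontinuous

lemma fconj_term_le {q x : ℝ} (hx : φ x ≠ ⊤) (hq : fconj φ q ≠ ⊤)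
    (hφ : IsEntropyFunction φ) : q * x - (φ x).toReal ≤ (fconj φ q).toReal := by
  have h : ((q * x - (φ x).toReal : ℝ) : EReal) ≤ fconj φ q := by
    rw [EReal.coe_sub, ← coe_phi_real hx]
    exact le_iSup (fun x : ℝ => ((q * x : ℝ) : EReal) - ((φ x : ℝ≥0∞) : EReal)) x
  rw [← EReal.coe_toReal hq (fconj_ne_bot hφ q)] at h
  exact_mod_cast h

lemma fconj_convex (hφ : IsEntropyFunction φ) {q1 q2 t : ℝ} (ht0 : 0 ≤ t) (ht1 : t ≤ 1)
    (h1 : fconj φ q1 ≠ ⊤) (h2 : fconj φ q2 ≠ ⊤) :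
    fconj φ (t * q1 + (1 - t) * q2) ≤
      ((t * (fconj φ q1).toReal + (1 - t) * (fconj φ q2).toReal : ℝ) : EReal) := by
  apply iSup_le
  intro x
  rcases eq_or_ne (φ x) ⊤ with hx | hx
  · simp [hx]
  · rw [coe_phi_real hx, ← EReal.coe_sub, EReal.coe_le_coe_iff]
    have e1 := fconj_term_le hx h1 hφ
    have e2 := fconj_term_le hx h2 hφ
    nlinarith [mul_le_mul_of_nonneg_left e1 ht0,
      mul_le_mul_of_nonneg_left e2 (by linarith : (0:ℝ) ≤ 1 - t)]

/-- A coercive lsc `EReal`-valued function on `ℝ`, finite somewhere, attains its minimum. -/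
lemma exists_min_of_lsc {f : ℝ → EReal} (K : ℝ) (hlsc : LowerSemicontinuous f)
    (hne : f 0 ≠ ⊤) (hbd : ∀ q, ((max (K - q) q : ℝ) : EReal) ≤ f q) :
    ∃ x : ℝ, ∀ q, f x ≤ f q := by
  set m := ⨅ q : ℝ, f q with hm
  have hm_le : m ≤ f 0 := iInf_le _ 0
  have hm_ne_top : m ≠ ⊤ := fun h => hne (top_le_iff.1 (h ▸ hm_le))
  have hm_ne_bot : m ≠ ⊥ := by
    have hK : ((K / 2 : ℝ) : EReal) ≤ m := by
      refine le_iInf fun q => le_trans ?_ (hbd q)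
      rw [EReal.coe_le_coe_iff]
      rcases le_total q (K / 2) with h | h
      · exact le_max_of_le_left (by linarith)
      · exact le_max_of_le_right h
    exact ((EReal.bot_lt_coe _).trans_le hK).ne'
  set r := m.toReal with hr
  have hmr : m = (r : EReal) := (EReal.coe_toReal hm_ne_top hm_ne_bot).symm
  set T : ℕ → Set ℝ := fun n => {q | f q ≤ ((r + 1 / (n + 1) : ℝ) : EReal)} with hT
  have hTsub : ∀ n, T n ⊆ Set.Icc (K - (r + 1)) (r + 1) := by
    intro n q hq
    have h1 : ((max (K - q) q : ℝ) : EReal) ≤ ((r + 1 : ℝ) : EReal) := by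
      refine (hbd q).trans (le_trans hq ?_)
      rw [EReal.coe_le_coe_iff]
      have : 1 / ((n : ℝ) + 1) ≤ 1 := by
        rw [div_le_one (by positivity)]; linarith [Nat.cast_nonneg (α := ℝ) n]
      linarith
    rw [EReal.coe_le_coe_iff] at h1
    exact ⟨by linarith [le_max_left (K - q) q], le_trans (le_max_right _ _) h1⟩
  have hTclosed : ∀ n, IsClosed (T n) := fun n => hlsc.isClosed_preimage _
  have hTne : ∀ n, (T n).Nonempty := by
    intro n
    have : m < ((r + 1 / (n + 1) : ℝ) : EReal) := by
      rw [hmr, EReal.coe_lt_coe_iff]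
      have : (0:ℝ) < 1 / ((n:ℝ) + 1) := by positivity
      linarith
    rw [hm, iInf_lt_iff] at this
    obtain ⟨q, hq⟩ := this
    exact ⟨q, hq.le⟩
  have hTcompact : ∀ n, IsCompact (T n) := fun n =>
    isCompact_Icc.of_isClosed_subset (hTclosed n) (hTsub n)
  have hTmono : ∀ n, T (n + 1) ⊆ T n := by
    intro n q hq
    simp only [hT, Set.mem_setOf_eq] at hq ⊢
    refine le_trans hq ?_
    rw [EReal.coe_le_coe_iff]
    have h1 : 1 / ((n:ℝ) + 1 + 1) ≤ 1 / ((n:ℝ) + 1) := by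
      apply one_div_le_one_div_of_le (by positivity); linarith
    push_cast
    linarith
  obtain ⟨x, hx⟩ := IsCompact.nonempty_iInter_of_sequence_nonempty_isCompact_isClosed
    T hTmono hTne (hTcompact 0) hTclosed
  have hxm : f x ≤ m := by
    by_contra h
    push_neg at h
    rw [hmr] at h
    obtain ⟨y, hy1, hy2⟩ := EReal.exists_between_coe_real h
    obtain ⟨n, hn⟩ := exists_nat_one_div_lt (ε := y - r) (by
      rw [EReal.coe_lt_coe_iff] at hy1; linarith)
    have hxn : x ∈ T n := Set.mem_iInter.1 hx n
    have : f x ≤ ((r + 1 / (n + 1) : ℝ) : EReal) := hxn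
    have h2 : ((r + 1 / ((n:ℝ) + 1) : ℝ) : EReal) < (y : EReal) := by
      rw [EReal.coe_lt_coe_iff]; linarith
    exact absurd (this.trans_lt (h2.trans_le hy2.le)) (lt_irrefl _)
  exact ⟨x, fun q => hxm.trans (iInf_le _ q)⟩
variable {ε : ℝ}

lemma obj_eq_real (hφ : IsEntropyFunction φ) {q : ℝ} (p : ℝ) (hq : fconj φ q ≠ ⊤) :
    aproxObj φ ε p q = ((ε * Real.exp ((p - q) / ε) + (fconj φ q).toReal : ℝ) : EReal) := by
  rw [aproxObj, EReal.coe_add, EReal.coe_toReal hq (fconj_ne_bot hφ q)]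

lemma obj_zero (hφ : IsEntropyFunction φ) (p : ℝ) :
    aproxObj φ ε p 0 = ((ε * Real.exp (p / ε) : ℝ) : EReal) := by
  rw [aproxObj, fconj_zero hφ, add_zero, sub_zero]

lemma fconj_ne_top_of_min (hφ : IsEntropyFunction φ) {p q : ℝ}
    (hmin : aproxObj φ ε p q ≤ aproxObj φ ε p 0) : fconj φ q ≠ ⊤ := by
  intro h
  rw [aproxObj, h, EReal.add_top_of_ne_bot (EReal.coe_ne_bot _), obj_zero hφ] at hmin
  exact (EReal.coe_ne_top _) (top_le_iff.1 hmin)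

lemma obj_lower (hφ : IsEntropyFunction φ) (hε : 0 < ε) (p q : ℝ) :
    ((max (2 * p + 2 * ε * (1 - Real.log 2) - q) q : ℝ) : EReal) ≤ aproxObj φ ε p q := by
  have h1 : (p - q) / ε - Real.log 2 + 1 ≤ Real.exp ((p - q) / ε) / 2 := by
    have h := Real.add_one_le_exp ((p - q) / ε - Real.log 2)
    rw [Real.exp_sub, Real.exp_log two_pos] at h
    linarith
  have hreal : max (2 * p + 2 * ε * (1 - Real.log 2) - q) q
      ≤ ε * Real.exp ((p - q) / ε) + q := by
    have h2 : 0 < Real.exp ((p - q) / ε) := Real.exp_pos _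
    have h3 : ε * ((p - q) / ε - Real.log 2 + 1) ≤ ε * (Real.exp ((p - q) / ε) / 2) :=
      mul_le_mul_of_nonneg_left h1 hε.le
    have h4 : ε * ((p - q) / ε) = p - q := by field_simp
    apply max_le
    · nlinarith
    · nlinarith [mul_pos hε h2]
  calc ((max (2 * p + 2 * ε * (1 - Real.log 2) - q) q : ℝ) : EReal)
      ≤ ((ε * Real.exp ((p - q) / ε) + q : ℝ) : EReal) := EReal.coe_le_coe_iff.2 hreal
    _ = ((ε * Real.exp ((p - q) / ε) : ℝ) : EReal) + ((q : ℝ) : EReal) := EReal.coe_add _ _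
    _ ≤ ((ε * Real.exp ((p - q) / ε) : ℝ) : EReal) + fconj φ q :=
        add_le_add le_rfl (le_fconj hφ q)
    _ = aproxObj φ ε p q := rfl

lemma obj_lsc (hφ : IsEntropyFunction φ) (p : ℝ) : LowerSemicontinuous (aproxObj φ ε p) := by
  have hc : Continuous fun q : ℝ => ((ε * Real.exp ((p - q) / ε) : ℝ) : EReal) :=
    continuous_coe_real_ereal.comp (by continuity)
  intro q
  refine LowerSemicontinuousAt.add' (hc.lowerSemicontinuous q) (fconj_lsc q) ?_
  rcases eq_or_ne (fconj φ q) ⊤ with h | h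
  · rw [h]; exact EReal.continuousAt_add_coe_top _
  · rw [← EReal.coe_toReal h (fconj_ne_bot hφ q)]; exact EReal.continuousAt_add_coe_coe _ _

lemma obj_exists_min (hφ : IsEntropyFunction φ) (hε : 0 < ε) (p : ℝ) :
    ∃ x, ∀ q, aproxObj φ ε p x ≤ aproxObj φ ε p q :=
  exists_min_of_lsc (2 * p + 2 * ε * (1 - Real.log 2)) (obj_lsc hφ p)
    (by rw [obj_zero hφ]; exact EReal.coe_ne_top _) (obj_lower hφ hε p)
lemma obj_min_unique (hφ : IsEntropyFunction φ) (hε : 0 < ε) {p x y : ℝ}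
    (hx : ∀ q, aproxObj φ ε p x ≤ aproxObj φ ε p q)
    (hy : ∀ q, aproxObj φ ε p y ≤ aproxObj φ ε p q) : x = y := by
  by_contra hne
  have hxt : fconj φ x ≠ ⊤ := fconj_ne_top_of_min hφ (hx 0)
  have hyt : fconj φ y ≠ ⊤ := fconj_ne_top_of_min hφ (hy 0)
  set cx := (fconj φ x).toReal with hcx
  set cy := (fconj φ y).toReal with hcy
  set z := (x + y) / 2 with hz
  have hxy : ε * Real.exp ((p - x) / ε) + cx = ε * Real.exp ((p - y) / ε) + cy := by
    have h1 := hx y; have h2 := hy x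
    rw [obj_eq_real hφ p hxt, obj_eq_real hφ p hyt, EReal.coe_le_coe_iff] at h1 h2
    linarith
  have hexp : Real.exp ((p - z) / ε) < (Real.exp ((p - x) / ε) + Real.exp ((p - y) / ε)) / 2 := by
    have hne2 : (p - x) / ε ≠ (p - y) / ε := fun h => hne (by
      field_simp at h; linarith)
    have h := strictConvexOn_exp.2 (Set.mem_univ ((p - x) / ε)) (Set.mem_univ ((p - y) / ε))
      hne2 (by norm_num : (0:ℝ) < 1/2) (by norm_num : (0:ℝ) < 1/2) (by norm_num)
    have harg : (1/2 : ℝ) • ((p - x) / ε) + (1/2 : ℝ) • ((p - y) / ε) = (p - z) / ε := by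
      simp only [smul_eq_mul, hz]; field_simp; ring
    rw [harg] at h
    simp only [smul_eq_mul] at h
    linarith
  have hconv := fconj_convex hφ (by norm_num : (0:ℝ) ≤ 1/2) (by norm_num : (1/2:ℝ) ≤ 1) hxt hyt
  have hzz : (1/2 : ℝ) * x + (1 - 1/2) * y = z := by rw [hz]; ring
  rw [hzz] at hconv
  have hfz : aproxObj φ ε p z
      ≤ ((ε * Real.exp ((p - z) / ε) + ((1/2) * cx + (1 - 1/2) * cy) : ℝ) : EReal) := by
    rw [aproxObj, EReal.coe_add]
    exact add_le_add le_rfl hconv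
  have hlt : ((ε * Real.exp ((p - z) / ε) + ((1/2) * cx + (1 - 1/2) * cy) : ℝ) : EReal)
      < aproxObj φ ε p x := by
    rw [obj_eq_real hφ p hxt, EReal.coe_lt_coe_iff]
    nlinarith [mul_lt_mul_of_pos_left hexp hε]
  exact absurd (((hx z).trans hfz).trans_lt hlt) (lt_irrefl _)

lemma exp_split (hε : 0 < ε) (p a : ℝ) :
    Real.exp ((p - a) / ε) = Real.exp (p / ε) * Real.exp (-a / ε) := by
  rw [← Real.exp_add]
  congr 1
  field_simp
  ring

lemma min_mono (hφ : IsEntropyFunction φ) (hε : 0 < ε) {p1 p2 a1 a2 : ℝ} (hp : p1 < p2)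
    (h1 : ∀ q, aproxObj φ ε p1 a1 ≤ aproxObj φ ε p1 q)
    (h2 : ∀ q, aproxObj φ ε p2 a2 ≤ aproxObj φ ε p2 q) : a1 ≤ a2 := by
  have t1 : fconj φ a1 ≠ ⊤ := fconj_ne_top_of_min hφ (h1 0)
  have t2 : fconj φ a2 ≠ ⊤ := fconj_ne_top_of_min hφ (h2 0)
  set c1 := (fconj φ a1).toReal
  set c2 := (fconj φ a2).toReal
  have e1 := h1 a2
  have e2 := h2 a1
  rw [obj_eq_real hφ p1 t1, obj_eq_real hφ p1 t2, EReal.coe_le_coe_iff] at e1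
  rw [obj_eq_real hφ p2 t2, obj_eq_real hφ p2 t1, EReal.coe_le_coe_iff] at e2
  by_contra hcon
  push_neg at hcon
  rw [exp_split hε p1 a1, exp_split hε p1 a2] at e1
  rw [exp_split hε p2 a2, exp_split hε p2 a1] at e2
  have hu : Real.exp (p1 / ε) < Real.exp (p2 / ε) :=
    Real.exp_lt_exp.2 (by gcongr)
  have hs : Real.exp (-a1 / ε) < Real.exp (-a2 / ε) :=
    Real.exp_lt_exp.2 (by gcongr ?_ / ε; linarith)
  nlinarith [mul_pos hε (mul_pos (sub_pos.2 hu) (sub_pos.2 hs))]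
lemma min_lip (hφ : IsEntropyFunction φ) (hε : 0 < ε) {p1 p2 a1 a2 : ℝ} (hp : p1 ≤ p2)
    (h1 : ∀ q, aproxObj φ ε p1 a1 ≤ aproxObj φ ε p1 q)
    (h2 : ∀ q, aproxObj φ ε p2 a2 ≤ aproxObj φ ε p2 q) : a2 ≤ a1 + (p2 - p1) := by
  by_contra hcon
  push_neg at hcon
  set h0 := p2 - p1 with hh0
  have hh0pos : 0 ≤ h0 := by simp [hh0]; linarith
  have ha12 : a1 < a2 := by linarith
  set t := h0 / (a2 - a1) with ht
  have ht0 : 0 ≤ t := div_nonneg hh0pos (by linarith)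
  have ht1 : t ≤ 1 := by
    rw [ht, div_le_one (by linarith)]; linarith
  have htt : t * (a2 - a1) = h0 := by
    rw [ht, div_mul_cancel₀]; linarith
  have hA : t * a1 + (1 - t) * a2 = a2 - h0 := by nlinarith [htt]
  have hB : (1 - t) * a1 + (1 - (1 - t)) * a2 = a1 + h0 := by nlinarith [htt]
  have t1 : fconj φ a1 ≠ ⊤ := fconj_ne_top_of_min hφ (h1 0)
  have t2 : fconj φ a2 ≠ ⊤ := fconj_ne_top_of_min hφ (h2 0)
  set c1 := (fconj φ a1).toReal with hc1
  set c2 := (fconj φ a2).toReal with hc2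
  have hconvA : fconj φ (a2 - h0) ≤ ((t * c1 + (1 - t) * c2 : ℝ) : EReal) := by
    have := fconj_convex hφ ht0 ht1 t1 t2
    rwa [hA] at this
  have hconvB : fconj φ (a1 + h0) ≤ (((1 - t) * c1 + (1 - (1 - t)) * c2 : ℝ) : EReal) := by
    have := fconj_convex hφ (by linarith : (0:ℝ) ≤ 1 - t) (by linarith : (1:ℝ) - t ≤ 1) t1 t2
    rwa [hB] at this
  set A := ε * Real.exp ((p1 - a1) / ε) with hAdef
  set B := ε * Real.exp ((p2 - a2) / ε) with hBdef
  have hab1 : p1 - (a2 - h0) = p2 - a2 := by rw [hh0]; ring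
  have hab2 : p2 - (a1 + h0) = p1 - a1 := by rw [hh0]; ring
  -- minimality inequalities converted to reals
  have m1 : A + c1 ≤ B + (t * c1 + (1 - t) * c2) := by
    have h := h1 (a2 - h0)
    rw [obj_eq_real hφ p1 t1] at h
    have h' : aproxObj φ ε p1 (a2 - h0) ≤ ((B + (t * c1 + (1 - t) * c2) : ℝ) : EReal) := by
      rw [aproxObj, hab1, EReal.coe_add, ← hBdef]
      exact add_le_add le_rfl hconvA
    have := h.trans h'
    rwa [EReal.coe_le_coe_iff] at this
  have m2 : B + c2 ≤ A + ((1 - t) * c1 + (1 - (1 - t)) * c2) := by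
    have h := h2 (a1 + h0)
    rw [obj_eq_real hφ p2 t2] at h
    have h' : aproxObj φ ε p2 (a1 + h0) ≤ ((A + ((1 - t) * c1 + (1 - (1 - t)) * c2) : ℝ) : EReal) := by
      rw [aproxObj, hab2, EReal.coe_add, ← hAdef]
      exact add_le_add le_rfl hconvB
    have := h.trans h'
    rwa [EReal.coe_le_coe_iff] at this
  have meq : A + c1 = B + (t * c1 + (1 - t) * c2) := by linarith
  -- hence a2 - h0 is also a minimizer for p1
  have hmin' : ∀ q, aproxObj φ ε p1 (a2 - h0) ≤ aproxObj φ ε p1 q := by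
    intro q
    have h' : aproxObj φ ε p1 (a2 - h0) ≤ ((B + (t * c1 + (1 - t) * c2) : ℝ) : EReal) := by
      rw [aproxObj, hab1, EReal.coe_add, ← hBdef]
      exact add_le_add le_rfl hconvA
    calc aproxObj φ ε p1 (a2 - h0) ≤ ((B + (t * c1 + (1 - t) * c2) : ℝ) : EReal) := h'
      _ = ((A + c1 : ℝ) : EReal) := by rw [meq]
      _ = aproxObj φ ε p1 a1 := (obj_eq_real hφ p1 t1).symm
      _ ≤ aproxObj φ ε p1 q := h1 q
  have := obj_min_unique hφ hε hmin' h1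
  linarith

/-- for every entropy function `φ` and `ε > 0`, the anisotropic proximity
operator `aprox_{φ^*}^ε(p) = argmin_q { ε e^{(p−q)/ε} + φ^*(q) }` is well defined (the
minimizer exists and is unique) and is `1`-Lipschitz in `p`. -/
theorem aprox_wellDefined_lipschitz
    (φ : ℝ → ℝ≥0∞) (hφ : IsEntropyFunction φ) (ε : ℝ) (hε : 0 < ε) :
    ∃ a : ℝ → ℝ,
      (∀ p q : ℝ, aproxObj φ ε p (a p) ≤ aproxObj φ ε p q) ∧
      (∀ p q : ℝ, (∀ r : ℝ, aproxObj φ ε p q ≤ aproxObj φ ε p r) → q = a p) ∧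
      LipschitzWith 1 a := by
  choose a hmin using fun p => obj_exists_min hφ hε p
  refine ⟨a, fun p q => hmin p q, fun p q hq => obj_min_unique hφ hε hq (hmin p), ?_⟩
  refine LipschitzWith.of_dist_le_mul fun p1 p2 => ?_
  rw [NNReal.coe_one, one_mul, Real.dist_eq, Real.dist_eq, abs_sub_le_iff]
  rcases lt_trichotomy p1 p2 with h | h | h
  · have hm := min_mono hφ hε h (hmin p1) (hmin p2)
    have hl := min_lip hφ hε h.le (hmin p1) (hmin p2)
    have habs : p2 - p1 ≤ |p1 - p2| := by rw [abs_sub_comm]; exact le_abs_self _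
    constructor <;> linarith
  · subst h
    have : a p1 = a p1 := rfl
    constructor <;> simp [abs_nonneg]
  · have hm := min_mono hφ hε h (hmin p2) (hmin p1)
    have hl := min_lip hφ hε h.le (hmin p2) (hmin p1)
    have habs : p1 - p2 ≤ |p1 - p2| := le_abs_self _
    constructor <;> linarith


end UMOT
end
end

section
/- Let t > 0 and ε > 0. For the entropy function φ(x) = t(x log x − x + 1) on [0,∞) (with 0 log 0 = 0, φ = +∞ on (−∞,0)), which corresponds to the scaled Kullback–Leibler divergence, the anisotropic proximity operator is aprox_{φ^*}^ε(p) = (t/(t+ε)) p for every p ∈ ℝ. -/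
open MeasureTheory ENNReal Real Filter Topology

noncomputable section
namespace UMOT

/-- The scaled Boltzmann–Shannon entropy `φ(x) = t(x log x − x + 1)` (with `0 log 0 = 0`
and `φ = ⊤` on `(-∞,0)`), corresponding to the Kullback–Leibler divergence `t·KL`. -/
def klEntropy (t : ℝ) (x : ℝ) : ℝ≥0∞ :=
  if x < 0 then ⊤ else ENNReal.ofReal (t * (x * Real.log x - x + 1))

lemma klAux_nonneg (x : ℝ) (hx : 0 ≤ x) : 0 ≤ x * Real.log x - x + 1 := by
  rcases eq_or_lt_of_le hx with h | h
  · simp [← h]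
  · have h1 : Real.log (1 / x) ≤ 1 / x - 1 := Real.log_le_sub_one_of_pos (by positivity)
    rw [Real.log_div one_ne_zero (ne_of_gt h), Real.log_one] at h1
    have h2 : x * (0 - Real.log x) ≤ x * (1 / x - 1) :=
      mul_le_mul_of_nonneg_left (by simpa using h1) hx
    have h3 : x * (1 / x) = 1 := by field_simp
    nlinarith

lemma key_ineq (t : ℝ) (ht : 0 < t) (q x : ℝ) (hx : 0 ≤ x) :
    q * x - t * (x * Real.log x - x + 1) ≤ t * Real.exp (q / t) - t := by
  rcases eq_or_lt_of_le hx with h | h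
  · have := Real.exp_pos (q / t)
    simp [← h]
    nlinarith
  · have h1 : q / t - Real.log x + 1 ≤ Real.exp (q / t - Real.log x) :=
      Real.add_one_le_exp _
    have h2 : Real.exp (q / t - Real.log x) = Real.exp (q / t) / x := by
      rw [Real.exp_sub, Real.exp_log h]
    rw [h2] at h1
    have h3 : t * x * (q / t - Real.log x + 1) ≤ t * x * (Real.exp (q / t) / x) :=
      mul_le_mul_of_nonneg_left h1 (by positivity)
    have h4 : t * x * (Real.exp (q / t) / x) = t * Real.exp (q / t) := by
      field_simp
    have h5 : t * x * (q / t) = q * x := by field_simp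
    nlinarith

lemma fconj_kl (t : ℝ) (ht : 0 < t) (q : ℝ) :
    fconj (klEntropy t) q = ((t * Real.exp (q / t) - t : ℝ) : EReal) := by
  unfold fconj klEntropy
  apply le_antisymm
  · apply iSup_le
    intro x
    by_cases hx : x < 0
    · rw [if_pos hx, EReal.coe_ennreal_top, EReal.sub_top]
      exact bot_le
    · push_neg at hx
      rw [if_neg (not_lt.2 hx)]
      have hnn : 0 ≤ t * (x * Real.log x - x + 1) :=
        mul_nonneg ht.le (klAux_nonneg x hx)
      rw [show ((ENNReal.ofReal (t * (x * Real.log x - x + 1)) : ℝ≥0∞) : EReal)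
          = ((t * (x * Real.log x - x + 1) : ℝ) : EReal) by simp [hnn]]
      rw [← EReal.coe_sub]
      exact EReal.coe_le_coe_iff.2 (key_ineq t ht q x hx)
  · refine le_trans (le_of_eq ?_) (le_iSup _ (Real.exp (q / t)))
    have hx : ¬ Real.exp (q / t) < 0 := not_lt.2 (Real.exp_pos _).le
    rw [if_neg hx]
    set y := Real.exp (q / t) with hy
    have hlog : Real.log y = q / t := Real.log_exp _
    have hval : t * (y * Real.log y - y + 1) = q * y - t * y + t := by
      rw [hlog]; field_simp
    have hnn : 0 ≤ t * (y * Real.log y - y + 1) :=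
      mul_nonneg ht.le (klAux_nonneg y (Real.exp_pos _).le)
    rw [show ((ENNReal.ofReal (t * (y * Real.log y - y + 1)) : ℝ≥0∞) : EReal)
        = ((t * (y * Real.log y - y + 1) : ℝ) : EReal) by simp [hnn]]
    rw [← EReal.coe_sub]
    congr 1
    rw [hval]; ring

lemma obj_real (t : ℝ) (ht : 0 < t) (ε : ℝ) (hε : 0 < ε) (p q : ℝ) :
    aproxObj (klEntropy t) ε p q
      = ((ε * Real.exp ((p - q) / ε) + (t * Real.exp (q / t) - t) : ℝ) : EReal) := by
  rw [aproxObj, fconj_kl t ht, ← EReal.coe_add]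

lemma real_ineq (t : ℝ) (ht : 0 < t) (ε : ℝ) (hε : 0 < ε) (p q : ℝ) :
    (t + ε) * Real.exp (p / (t + ε)) - t
      ≤ ε * Real.exp ((p - q) / ε) + (t * Real.exp (q / t) - t) := by
  set c := p / (t + ε) with hc
  have htε : 0 < t + ε := by linarith
  have h1 : (p - q) / ε - c + 1 ≤ Real.exp ((p - q) / ε - c) := Real.add_one_le_exp _
  have h2 : q / t - c + 1 ≤ Real.exp (q / t - c) := Real.add_one_le_exp _
  have e1 : Real.exp ((p - q) / ε) = Real.exp c * Real.exp ((p - q) / ε - c) := by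
    rw [← Real.exp_add]; ring_nf
  have e2 : Real.exp (q / t) = Real.exp c * Real.exp (q / t - c) := by
    rw [← Real.exp_add]; ring_nf
  have hec : 0 < Real.exp c := Real.exp_pos _
  have hcp : (t + ε) * c = p := by rw [hc]; field_simp
  have h3 : ε * ((p - q) / ε) = p - q := by field_simp
  have h4 : t * (q / t) = q := by field_simp
  nlinarith [mul_le_mul_of_nonneg_left h1 (mul_pos hε hec).le,
    mul_le_mul_of_nonneg_left h2 (mul_pos ht hec).le]

lemma real_ineq_strict (t : ℝ) (ht : 0 < t) (ε : ℝ) (hε : 0 < ε) (p q : ℝ)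
    (hq : q ≠ t / (t + ε) * p) :
    (t + ε) * Real.exp (p / (t + ε)) - t
      < ε * Real.exp ((p - q) / ε) + (t * Real.exp (q / t) - t) := by
  set c := p / (t + ε) with hc
  have htε : 0 < t + ε := by linarith
  have hne : (p - q) / ε - c ≠ 0 := by
    intro h
    apply hq
    have : p - q = ε * c := by
      field_simp at h; linarith
    rw [hc] at this
    field_simp at this ⊢
    linarith
  have h1 : (p - q) / ε - c + 1 < Real.exp ((p - q) / ε - c) :=
    Real.add_one_lt_exp hne
  have h2 : q / t - c + 1 ≤ Real.exp (q / t - c) := Real.add_one_le_exp _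
  have e1 : Real.exp ((p - q) / ε) = Real.exp c * Real.exp ((p - q) / ε - c) := by
    rw [← Real.exp_add]; ring_nf
  have e2 : Real.exp (q / t) = Real.exp c * Real.exp (q / t - c) := by
    rw [← Real.exp_add]; ring_nf
  have hec : 0 < Real.exp c := Real.exp_pos _
  have hcp : (t + ε) * c = p := by rw [hc]; field_simp
  have h3 : ε * ((p - q) / ε) = p - q := by field_simp
  have h4 : t * (q / t) = q := by field_simp
  nlinarith [mul_lt_mul_of_pos_left h1 (mul_pos hε hec),
    mul_le_mul_of_nonneg_left h2 (mul_pos ht hec).le]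

/-- (Example 4.2 iii)): for the entropy function `φ = t(x log x − x + 1)`,
the anisotropic proximity operator is `aprox_{φ^*}^ε(p) = (t/(t+ε)) p`, i.e. this value is
the unique minimizer of `q ↦ ε e^{(p−q)/ε} + φ^*(q)`. -/
theorem aprox_kl (t : ℝ) (ht : 0 < t) (ε : ℝ) (hε : 0 < ε) (p : ℝ) :
    (∀ q : ℝ, aproxObj (klEntropy t) ε p (t / (t + ε) * p) ≤ aproxObj (klEntropy t) ε p q)
    ∧ (∀ q : ℝ, (∀ r : ℝ, aproxObj (klEntropy t) ε p q ≤ aproxObj (klEntropy t) ε p r) →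
        q = t / (t + ε) * p) := by
  have htε : 0 < t + ε := by linarith
  have hqstar : ∀ s : ℝ, aproxObj (klEntropy t) ε p s
      = ((ε * Real.exp ((p - s) / ε) + (t * Real.exp (s / t) - t) : ℝ) : EReal) :=
    fun s => obj_real t ht ε hε p s
  have hmin : aproxObj (klEntropy t) ε p (t / (t + ε) * p)
      = (((t + ε) * Real.exp (p / (t + ε)) - t : ℝ) : EReal) := by
    rw [hqstar]
    congr 1
    have h1 : (p - t / (t + ε) * p) / ε = p / (t + ε) := by field_simp; ring
    have h2 : t / (t + ε) * p / t = p / (t + ε) := by field_simp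
    rw [h1, h2]; ring
  constructor
  · intro q
    rw [hmin, hqstar]
    exact EReal.coe_le_coe_iff.2 (real_ineq t ht ε hε p q)
  · intro q hq
    by_contra hne
    have h1 := hq (t / (t + ε) * p)
    rw [hmin, hqstar] at h1
    have h2 := EReal.coe_le_coe_iff.1 h1
    exact absurd h2 (not_le.2 (real_ineq_strict t ht ε hε p q hne))


end UMOT
end
end

section
/- Let t > 0 and ε > 0. For the entropy function φ(x) = t|x−1| on [0,∞) (with φ = +∞ on (−∞,0)), which corresponds to the scaled total variation distance, the anisotropic proximity operator is the clipping map: aprox_{φ^*}^ε(p) = −t if p < −t, aprox_{φ^*}^ε(p) = p if p ∈ [−t,t], and aprox_{φ^*}^ε(p) = t if p > t. -/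
open MeasureTheory ENNReal Real Filter Topology

noncomputable section
namespace UMOT

/-- The scaled total variation entropy `φ(x) = t|x−1|` on `[0,∞)` (with `φ = ⊤` on
`(-∞,0)`), corresponding to the scaled total variation distance. -/
def tvEntropy (t : ℝ) (x : ℝ) : ℝ≥0∞ :=
  if x < 0 then ⊤ else ENNReal.ofReal (t * |x - 1|)


/-! Auxiliary lemmas -/

lemma tv_term (t q x : ℝ) (ht : 0 ≤ t) (hx : 0 ≤ x) :
    ((q * x : ℝ) : EReal) - ((tvEntropy t x : ℝ≥0∞) : EReal)
      = ((q * x - t * |x - 1| : ℝ) : EReal) := by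
  rw [tvEntropy, if_neg (not_lt.2 hx), EReal.coe_ennreal_ofReal,
    max_eq_left (by positivity), ← EReal.coe_sub]

lemma fconj_ge (φ : ℝ → ℝ≥0∞) (q x : ℝ) :
    ((q * x : ℝ) : EReal) - ((φ x : ℝ≥0∞) : EReal) ≤ fconj φ q := le_iSup (fun x : ℝ => ((q * x : ℝ) : EReal) - ((φ x : ℝ≥0∞) : EReal)) x

lemma fconj_lb1 (t q : ℝ) (ht : 0 ≤ t) : (q:EReal) ≤ fconj (tvEntropy t) q := by
  have := fconj_ge (tvEntropy t) q 1
  rw [tv_term t q 1 ht zero_le_one] at this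
  simpa using this

lemma fconj_lb0 (t q : ℝ) (ht : 0 ≤ t) : ((-t:ℝ):EReal) ≤ fconj (tvEntropy t) q := by
  have := fconj_ge (tvEntropy t) q 0
  rw [tv_term t q 0 ht le_rfl] at this
  simpa using this

lemma fconj_top (t q : ℝ) (ht : 0 < t) (hq : t < q) : fconj (tvEntropy t) q = ⊤ := by
  rw [fconj, iSup_eq_top]
  intro b hb
  induction b with
  | bot =>
    exact ⟨1, by rw [tv_term t q 1 ht.le zero_le_one]; exact EReal.bot_lt_coe _⟩
  | coe r =>
    set X : ℝ := max 1 ((r - t) / (q - t) + 1) with hX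
    have hX1 : (1:ℝ) ≤ X := le_max_left _ _
    refine ⟨X, ?_⟩
    rw [tv_term t q X ht.le (by linarith)]
    rw [abs_of_nonneg (by linarith)]
    have hlt : (r - t) / (q - t) < X := lt_of_lt_of_le (by linarith) (le_max_right _ _)
    have hqt : 0 < q - t := by linarith
    rw [div_lt_iff₀ hqt] at hlt
    exact_mod_cast (by linarith : r < q * X - t * (X - 1))
  | top => exact absurd hb (lt_irrefl _)

lemma fconj_ub (t q : ℝ) (ht : 0 < t) (hq : q ≤ t) :
    fconj (tvEntropy t) q ≤ ((max q (-t) : ℝ) : EReal) := by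
  rw [fconj, iSup_le_iff]
  intro x
  rcases lt_or_ge x 0 with hx | hx
  · rw [tvEntropy, if_pos hx]
    simp
  · rw [tv_term t q x ht.le hx]
    have : q * x - t * |x - 1| ≤ max q (-t) := by
      rcases le_or_gt 1 x with h1 | h1
      · rw [abs_of_nonneg (by linarith)]
        have : q * x - t * (x - 1) ≤ q := by nlinarith
        exact this.trans (le_max_left _ _)
      · rw [abs_of_neg (by linarith)]
        rcases le_or_gt 0 (q + t) with h2 | h2
        · refine le_trans ?_ (le_max_left _ _); nlinarith
        · refine le_trans ?_ (le_max_right _ _); nlinarith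
    exact_mod_cast this

open Real in
lemma clip_strict (t ε p q m : ℝ) (ht : 0 < t) (hε : 0 < ε)
    (hm : m = if p < -t then -t else if p ≤ t then p else t) (hq : q ≤ t) (hne : q ≠ m) :
    ε * Real.exp ((p - m)/ε) + m < ε * Real.exp ((p - q)/ε) + max q (-t) := by
  by_cases h1 : p < -t
  · rw [hm, if_pos h1] at *
    rcases lt_or_ge q (-t) with h2 | h2
    · rw [max_eq_right h2.le, sub_neg_eq_add]
      have hd : (p + t)/ε < (p - q)/ε := div_lt_div_of_pos_right (by linarith) hε
      have := Real.exp_lt_exp.2 hd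
      nlinarith
    · have h3 : -t < q := lt_of_le_of_ne h2 (Ne.symm hne)
      have hrw : (p - q)/ε = (p + t)/ε + (-((q + t)/ε)) := by ring
      rw [sub_neg_eq_add, hrw, Real.exp_add]
      set E := Real.exp ((p + t)/ε) with hE
      set G := Real.exp (-((q + t)/ε)) with hG
      have hE1 : E < 1 := Real.exp_lt_one_iff.2 (div_neg_of_neg_of_pos (by linarith) hε)
      have hE0 : 0 < E := Real.exp_pos _
      have hqt : 0 < q + t := by linarith
      have hG1 : 1 - (q + t)/ε < G := by
        have := Real.add_one_lt_exp (x := -((q + t)/ε))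
          (neg_ne_zero.2 (div_pos hqt hε).ne')
        linarith
      have hG2 : G < 1 := Real.exp_lt_one_iff.2 (neg_lt_zero.2 (div_pos hqt hε))
      have hmax : q ≤ max q (-t) := le_max_left _ _
      have hw : ε * ((q + t)/ε) = q + t := by field_simp
      have key : ε * E + -t < ε * (E * G) + q := by
        have h5 : E * (1 - G) ≤ 1 - G := by nlinarith
        have h6 : ε * (E * (1 - G)) ≤ ε * (1 - G) := by nlinarith
        have h7 : ε * (1 - G) < ε * ((q + t)/ε) :=
          mul_lt_mul_of_pos_left (by linarith) hε
        nlinarith [h6, h7, hw]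
      linarith
  · push_neg at h1
    by_cases h2 : p ≤ t
    · rw [hm, if_neg (not_lt.2 h1), if_pos h2] at *
      have hb : (p - q)/ε ≠ 0 := by
        apply div_ne_zero _ hε.ne'
        exact sub_ne_zero.2 (fun h => hne h.symm)
      have h := Real.add_one_lt_exp hb
      have hw : (p - q)/ε * ε = p - q := div_mul_cancel₀ _ hε.ne'
      have key : ε + p < ε * Real.exp ((p - q)/ε) + q := by nlinarith
      have hmax : q ≤ max q (-t) := le_max_left _ _
      simp only [sub_self, zero_div, Real.exp_zero, mul_one]
      linarith
    · push_neg at h2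
      rw [hm, if_neg (not_lt.2 h1), if_neg (not_le.2 h2)] at *
      have h3 : q < t := lt_of_le_of_ne hq hne
      have hrw : (p - q)/ε = (p - t)/ε + (t - q)/ε := by ring
      rw [hrw, Real.exp_add]
      set A := Real.exp ((p - t)/ε) with hA
      set V := Real.exp ((t - q)/ε) with hV
      have hA1 : 1 ≤ A := Real.one_le_exp (div_nonneg (by linarith) hε.le)
      have hV1 : (t - q)/ε + 1 < V := Real.add_one_lt_exp (div_pos (by linarith) hε).ne'
      have hw : ε * ((t - q)/ε) = t - q := by field_simp
      have hmax : q ≤ max q (-t) := le_max_left _ _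
      have key : ε * A + t < ε * (A * V) + q := by
        nlinarith [Real.exp_pos ((t - q)/ε),
          mul_le_mul_of_nonneg_right hA1 (show (0:ℝ) ≤ V - 1 by nlinarith [hε])]
      linarith

/-- (Example 4.2 iv)): for the entropy function `φ = t|x−1|`, the
anisotropic proximity operator is the clipping map to `[−t,t]`, i.e. the clipped value is
the unique minimizer of `q ↦ ε e^{(p−q)/ε} + φ^*(q)`. -/
theorem aprox_tv (t : ℝ) (ht : 0 < t) (ε : ℝ) (hε : 0 < ε) (p : ℝ) :
    (∀ q : ℝ, aproxObj (tvEntropy t) ε p (if p < -t then -t else if p ≤ t then p else t)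
        ≤ aproxObj (tvEntropy t) ε p q)
    ∧ (∀ q : ℝ, (∀ r : ℝ, aproxObj (tvEntropy t) ε p q ≤ aproxObj (tvEntropy t) ε p r) →
        q = if p < -t then -t else if p ≤ t then p else t) := by

  set m := if p < -t then -t else if p ≤ t then p else t with hmdef
  have hm1 : -t ≤ m := by rw [hmdef]; split_ifs <;> linarith
  have hm2 : m ≤ t := by rw [hmdef]; split_ifs <;> linarith
  have hfm : fconj (tvEntropy t) m = (m : EReal) := by
    refine le_antisymm ?_ (fconj_lb1 t m ht.le)
    have h := fconj_ub t m ht hm2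
    rwa [max_eq_left (by linarith)] at h
  have hobjm : aproxObj (tvEntropy t) ε p m
      = ((ε * Real.exp ((p - m)/ε) + m : ℝ) : EReal) := by
    rw [aproxObj, hfm, ← EReal.coe_add]
  have hlow : ∀ q : ℝ, q ≤ t →
      ((ε * Real.exp ((p - q)/ε) + max q (-t) : ℝ) : EReal) ≤ aproxObj (tvEntropy t) ε p q := by
    intro q hq
    rw [aproxObj, EReal.coe_add]
    apply add_le_add_right
    rcases le_total q (-t) with h | h
    · rw [max_eq_right h]; exact fconj_lb0 t q ht.le
    · rw [max_eq_left h]; exact fconj_lb1 t q ht.le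
  have hstrict : ∀ q : ℝ, q ≠ m →
      aproxObj (tvEntropy t) ε p m < aproxObj (tvEntropy t) ε p q := by
    intro q hne
    rcases le_or_gt q t with hq | hq
    · rw [hobjm]
      refine lt_of_lt_of_le ?_ (hlow q hq)
      exact_mod_cast clip_strict t ε p q m ht hε hmdef hq hne
    · have htop : aproxObj (tvEntropy t) ε p q = ⊤ := by
        rw [aproxObj, fconj_top t q ht hq]; rfl
      rw [hobjm, htop]
      exact EReal.coe_lt_top _
  refine ⟨fun q => ?_, fun q hq => ?_⟩
  · by_cases h : q = m
    · rw [h]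
    · exact (hstrict q h).le
  · by_contra hne
    exact absurd (hq m) (not_le.2 (hstrict q hne))


end UMOT
end
end
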